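/- Let M be a symmetric integer n×n matrix (n ≥ 1) that is not copositive, i.e. there exists x ∈ ℝⁿ with nonnegative entries such that xᵀMx < 0. Let L = Σ_{1≤i≤j≤n} (⌈log₂(|m_ij|+1)⌉ + 1) be the binary encoding length of M and let d = max_{i,j} |m_ij|. Then there exists a rational vector y ∈ ℚⁿ with nonnegative entries such that yᵀMy < 0 and every coordinate of y has the form a_j/(4dn²) for some natural number a_j with a_j ≤ 4dn²·2^{2L−1} + 1. -/

import Mathlib

open Matrix Finset

/-- Binary encoding length of a symmetric integer matrix:
`L = Σ_{1 ≤ i ≤ j ≤ n} (⌈log₂(|m_ij|+1)⌉ + 1)`. -/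
def encodingLength {n : ℕ} (M : Matrix (Fin n) (Fin n) ℤ) : ℕ :=
  ∑ i : Fin n, ∑ j ∈ Finset.univ.filter (fun j => i ≤ j),
    (Nat.clog 2 ((M i j).natAbs + 1) + 1)

/-- The largest absolute value of an entry of an integer matrix. -/
def maxAbs {n : ℕ} (M : Matrix (Fin n) (Fin n) ℤ) : ℕ :=
  Finset.univ.sup fun p : Fin n × Fin n => (M p.1 p.2).natAbs

namespace Stmt0Aux


lemma factpow : ∀ m : ℕ, Nat.factorial (m + 1) ≤ 2 ^ (∑ j ∈ Finset.range m, (j + 1)) := by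
  intro m
  induction m with
  | zero => simp [Nat.factorial]
  | succ m ih =>
    rw [Finset.sum_range_succ, pow_add]
    calc Nat.factorial (m + 2) = (m + 2) * Nat.factorial (m + 1) := rfl
    _ ≤ 2 ^ (m + 1) * 2 ^ (∑ j ∈ Finset.range m, (j + 1)) := by
        exact Nat.mul_le_mul (Nat.succ_le_of_lt (Nat.lt_two_pow_self (n := m + 1))) ih
    _ = 2 ^ (∑ j ∈ Finset.range m, (j + 1)) * 2 ^ (m + 1) := by ring

lemma count_bound {n : ℕ} (hn : 1 ≤ n) (a : Fin n → Fin n → ℕ)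
    (hsym : ∀ i j, a i j = a j i) (L : ℕ)
    (hL : L = ∑ i : Fin n, ∑ j ∈ Finset.univ.filter (fun j => i ≤ j),
      (Nat.clog 2 (a i j + 1) + 1)) :
    Nat.factorial (n + 1) * (∏ i : Fin n, ∏ j : Fin n, (a i j + 1)) ≤ 2 ^ (2 * L - 1)
      ∧ 1 ≤ L := by
  classical
  set T : ℕ := ∑ i : Fin n, (Finset.univ.filter (fun j => i ≤ j)).card with hTdef
  have hT : T = ∑ j ∈ Finset.range n, (j + 1) := by
    have h1 : ∀ i : Fin n, (Finset.univ.filter (fun j => i ≤ j)).card = n - i.val := by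
      intro i
      rw [show Finset.univ.filter (fun j => i ≤ j) = Finset.Ici i by ext j; simp]
      exact Fin.card_Ici i
    rw [hTdef, Finset.sum_congr rfl fun i _ => h1 i, Fin.sum_univ_eq_sum_range (fun k => n - k) n,
      ← Finset.sum_range_reflect (fun j => j + 1) n]
    exact Finset.sum_congr rfl fun j hj => by have := Finset.mem_range.1 hj; omega
  have hT1 : 1 ≤ T := by
    rw [hT]
    calc 1 = ∑ j ∈ Finset.range 1, (j + 1) := by simp
    _ ≤ _ := Finset.sum_le_sum_of_subset (Finset.range_subset_range.2 hn)
  set Pd : ℕ := ∏ i : Fin n, ∏ j ∈ Finset.univ.filter (fun j => i ≤ j), (a i j + 1) with hPd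
  have h2L : 2 ^ T * Pd ≤ 2 ^ L := by
    have e1 : (2:ℕ) ^ L = ∏ i : Fin n, ∏ j ∈ Finset.univ.filter (fun j => i ≤ j),
        2 ^ (Nat.clog 2 (a i j + 1) + 1) := by
      rw [hL, ← Finset.prod_pow_eq_pow_sum]
      exact Finset.prod_congr rfl fun i _ => (Finset.prod_pow_eq_pow_sum _ _ _).symm
    have e2 : (2:ℕ) ^ T * Pd = ∏ i : Fin n, ∏ j ∈ Finset.univ.filter (fun j => i ≤ j),
        (2 * (a i j + 1)) := by
      rw [hTdef, hPd, ← Finset.prod_pow_eq_pow_sum, ← Finset.prod_mul_distrib]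
      refine Finset.prod_congr rfl fun i _ => ?_
      rw [Finset.prod_mul_distrib, Finset.prod_const]
    rw [e1, e2]
    refine Finset.prod_le_prod' fun i _ => Finset.prod_le_prod' fun j _ => ?_
    rw [pow_succ, Nat.mul_comm (2 ^ _) 2]
    exact Nat.mul_le_mul_left 2 (Nat.le_pow_clog (by norm_num) _)
  have hfull : (∏ i : Fin n, ∏ j : Fin n, (a i j + 1)) ≤ Pd * Pd := by
    have hsplit : (∏ i : Fin n, ∏ j : Fin n, (a i j + 1))
        = Pd * ∏ i : Fin n, ∏ j ∈ Finset.univ.filter (fun j => ¬ i ≤ j), (a i j + 1) := by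
      rw [hPd, ← Finset.prod_mul_distrib]
      exact Finset.prod_congr rfl fun i _ =>
        (Finset.prod_filter_mul_prod_filter_not Finset.univ _ _).symm
    rw [hsplit]
    refine Nat.mul_le_mul_left Pd ?_
    have e3 : (∏ i : Fin n, ∏ j ∈ Finset.univ.filter (fun j => ¬ i ≤ j), (a i j + 1))
        = ∏ j : Fin n, ∏ i ∈ Finset.univ.filter (fun i => j < i), (a i j + 1) := by
      simp only [not_le]
      rw [Finset.prod_comm']
      intro x y; simp
    rw [e3, hPd]
    refine Finset.prod_le_prod' fun j _ => ?_
    calc ∏ i ∈ Finset.univ.filter (fun i => j < i), (a i j + 1)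
        = ∏ i ∈ Finset.univ.filter (fun i => j < i), (a j i + 1) :=
          Finset.prod_congr rfl fun i _ => by rw [hsym]
    _ ≤ ∏ i ∈ Finset.univ.filter (fun i => j ≤ i), (a j i + 1) := by
          apply Finset.prod_le_prod_of_subset_of_one_le'
          · intro i hi; simp only [Finset.mem_filter] at *; exact ⟨hi.1, le_of_lt hi.2⟩
          · intro i _ _; omega
  have hLT : T ≤ L := by
    rw [hL, hTdef]
    refine Finset.sum_le_sum fun i _ => ?_
    calc (Finset.univ.filter (fun j => i ≤ j)).card
        = ∑ _j ∈ Finset.univ.filter (fun j => i ≤ j), 1 := by rw [Finset.card_eq_sum_ones]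
    _ ≤ _ := Finset.sum_le_sum fun j _ => by omega
  have hL1 : 1 ≤ L := le_trans hT1 hLT
  refine ⟨?_, hL1⟩
  have hf : Nat.factorial (n + 1) ≤ 2 ^ T := hT ▸ factpow n
  have key : 2 * (Nat.factorial (n + 1) * (∏ i : Fin n, ∏ j : Fin n, (a i j + 1)))
      ≤ 2 * 2 ^ (2 * L - 1) := by
    calc 2 * (Nat.factorial (n + 1) * (∏ i : Fin n, ∏ j : Fin n, (a i j + 1)))
        ≤ 2 * (2 ^ T * (Pd * Pd)) := by
          exact Nat.mul_le_mul_left 2 (Nat.mul_le_mul hf hfull)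
    _ = 2 ^ (T + 1) * (Pd * Pd) := by ring
    _ ≤ 2 ^ (2 * T) * (Pd * Pd) := by
          exact Nat.mul_le_mul_right _ (Nat.pow_le_pow_right (by norm_num) (by omega))
    _ = (2 ^ T * Pd) * (2 ^ T * Pd) := by ring
    _ ≤ 2 ^ L * 2 ^ L := Nat.mul_le_mul h2L h2L
    _ = 2 ^ (2 * L) := by rw [← pow_add]; ring_nf
    _ = 2 * 2 ^ (2 * L - 1) := by
          rw [← pow_succ']
          congr 1
          omega
  exact Nat.le_of_mul_le_mul_left key (by norm_num)



variable {n : ℕ}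

noncomputable def Qf (c : Fin n → Fin n → ℝ) (z : Fin n → ℝ) : ℝ :=
  ∑ i : Fin n, ∑ j : Fin n, c i j * z i * z j

noncomputable def Bf (c : Fin n → Fin n → ℝ) (z u : Fin n → ℝ) : ℝ :=
  ∑ i : Fin n, ∑ j : Fin n, c i j * z i * u j

lemma Bf_swap {c : Fin n → Fin n → ℝ} (csym : ∀ i j, c i j = c j i)
    (z u : Fin n → ℝ) : Bf c u z = Bf c z u := by
  unfold Bf
  rw [Finset.sum_comm]
  refine Finset.sum_congr rfl fun i _ => Finset.sum_congr rfl fun j _ => ?_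
  rw [csym j i]; ring

lemma Qf_add_smul {c : Fin n → Fin n → ℝ} (csym : ∀ i j, c i j = c j i)
    (z u : Fin n → ℝ) (t : ℝ) :
    Qf c (z + t • u) = Qf c z + 2 * t * Bf c z u + t ^ 2 * Qf c u := by
  have hswap := Bf_swap csym z u
  unfold Qf Bf at *
  have h1 : ∀ i : Fin n, ∑ j, c i j * (z + t • u) i * (z + t • u) j
      = (∑ j, c i j * z i * z j) + ((t * ∑ j, c i j * z i * u j)
        + ((t * ∑ j, c i j * u i * z j) + t ^ 2 * ∑ j, c i j * u i * u j)) := by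
    intro i
    rw [Finset.mul_sum, Finset.mul_sum, Finset.mul_sum, ← Finset.sum_add_distrib,
      ← Finset.sum_add_distrib, ← Finset.sum_add_distrib]
    refine Finset.sum_congr rfl fun j _ => ?_
    simp only [Pi.add_apply, Pi.smul_apply, smul_eq_mul]
    ring
  rw [Finset.sum_congr rfl fun i _ => h1 i]
  rw [Finset.sum_add_distrib, Finset.sum_add_distrib, Finset.sum_add_distrib,
    ← Finset.mul_sum, ← Finset.mul_sum, ← Finset.mul_sum, hswap]
  ring

lemma Qf_smul {c : Fin n → Fin n → ℝ} (r : ℝ) (z : Fin n → ℝ) :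
    Qf c (r • z) = r ^ 2 * Qf c z := by
  unfold Qf
  rw [Finset.mul_sum]
  refine Finset.sum_congr rfl fun i _ => ?_
  rw [Finset.mul_sum]
  refine Finset.sum_congr rfl fun j _ => ?_
  simp only [Pi.smul_apply, smul_eq_mul]; ring

lemma Qf_continuous (c : Fin n → Fin n → ℝ) : Continuous (Qf c) := by
  unfold Qf
  exact continuous_finset_sum _ fun i _ => continuous_finset_sum _ fun j _ =>
    (continuous_const.mul (continuous_apply i)).mul (continuous_apply j)

lemma det_abs_le {ι : Type} [Fintype ι] [DecidableEq ι] (A : Matrix ι ι ℤ) (G : ι → ℤ)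
    (hG : ∀ r q, |A r q| ≤ G r) :
    |A.det| ≤ (Nat.factorial (Fintype.card ι) : ℤ) * ∏ r, G r := by
  rw [Matrix.det_apply]
  calc |∑ σ : Equiv.Perm ι, Equiv.Perm.sign σ • ∏ i, A (σ i) i|
      ≤ ∑ σ : Equiv.Perm ι, |Equiv.Perm.sign σ • ∏ i, A (σ i) i| :=
        Finset.abs_sum_le_sum_abs _ _
  _ ≤ ∑ _σ : Equiv.Perm ι, ∏ r, G r := by
      refine Finset.sum_le_sum fun σ _ => ?_
      have h1 : |Equiv.Perm.sign σ • ∏ i, A (σ i) i| = |∏ i, A (σ i) i| := by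
        rw [Units.smul_def, smul_eq_mul, abs_mul, Int.abs_eq_natAbs, Int.units_natAbs,
          Nat.cast_one, one_mul]
      rw [h1, Finset.abs_prod]
      have h2 : (∏ i, |A (σ i) i|) = ∏ r, |A r (σ.symm r)| := by
        rw [← Equiv.prod_comp σ (fun r => |A r (σ.symm r)|)]
        exact Finset.prod_congr rfl fun i _ => by rw [Equiv.symm_apply_apply]
      rw [h2]
      exact Finset.prod_le_prod (fun r _ => abs_nonneg _) (fun r _ => hG r _)
  _ = (Nat.factorial (Fintype.card ι) : ℤ) * ∏ r, G r := by
      rw [Finset.sum_const, Finset.card_univ, Fintype.card_perm, nsmul_eq_mul]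

set_option maxHeartbeats 2000000 in
lemma gap (hn : 1 ≤ n) (M : Matrix (Fin n) (Fin n) ℤ) (hsym : M.IsSymm)
    (c : Fin n → Fin n → ℝ) (hc : ∀ i j, c i j = ((M i j : ℤ) : ℝ))
    (x0 : Fin n → ℝ) (hx0 : ∀ i, 0 ≤ x0 i) (hQx0 : Qf c x0 < 0) :
    ∃ w : Fin n → ℝ, (∀ i, 0 ≤ w i) ∧ (∀ i, w i ≤ 1) ∧
      ((Nat.factorial (n + 1) * ∏ i : Fin n, ∏ j : Fin n, ((M i j).natAbs + 1) : ℕ) : ℝ)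
        * Qf c w ≤ -1 := by
  classical
  have hMsym : ∀ i j, M i j = M j i := by
    intro i j
    have := congrFun (congrFun hsym j) i
    rwa [Matrix.transpose_apply] at this
  have csym : ∀ i j, c i j = c j i := by
    intro i j; rw [hc, hc, hMsym]
  set Δ : Set (Fin n → ℝ) := {x | (∀ i, 0 ≤ x i) ∧ ∑ i, x i = 1} with hΔ
  -- normalize the witness
  have hs : 0 < ∑ i, x0 i := by
    rcases (Finset.sum_nonneg fun i (_ : i ∈ univ) => hx0 i).lt_or_eq with h | h
    · exact h
    · exfalso
      have hz : ∀ i ∈ univ, x0 i = 0 :=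
        (Finset.sum_eq_zero_iff_of_nonneg (fun i _ => hx0 i)).1 h.symm
      have : Qf c x0 = 0 := by
        unfold Qf
        refine Finset.sum_eq_zero fun i _ => Finset.sum_eq_zero fun j _ => ?_
        rw [hz i (mem_univ i)]; ring
      rw [this] at hQx0; exact lt_irrefl 0 hQx0
  set xh : Fin n → ℝ := (∑ i, x0 i)⁻¹ • x0 with hxh
  have hxhΔ : xh ∈ Δ := by
    constructor
    · intro i
      exact mul_nonneg (inv_nonneg.2 hs.le) (hx0 i)
    · simp only [hxh, Pi.smul_apply, smul_eq_mul]
      rw [← Finset.mul_sum, inv_mul_cancel₀ hs.ne']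
  have hQxh : Qf c xh < 0 := by
    rw [hxh, Qf_smul]
    exact mul_neg_of_pos_of_neg (by positivity) hQx0
  -- compactness and a minimizer
  have hΔcompact : IsCompact Δ := by
    have hsub : Δ ⊆ Set.pi Set.univ (fun _ : Fin n => Set.Icc (0:ℝ) 1) := by
      intro x hx i _
      exact ⟨hx.1 i, by
        rw [← hx.2]; exact Finset.single_le_sum (fun j (_ : j ∈ univ) => hx.1 j) (mem_univ i)⟩
    have hclosed : IsClosed Δ := by
      have : Δ = (⋂ i, {x : Fin n → ℝ | 0 ≤ x i}) ∩ {x | (∑ i, x i) = 1} := by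
        ext x
        simp only [hΔ, Set.mem_setOf_eq, Set.mem_inter_iff, Set.mem_iInter]
      rw [this]
      exact IsClosed.inter (isClosed_iInter fun i =>
          isClosed_le continuous_const (continuous_apply i))
        (isClosed_eq (continuous_finset_sum _ fun i _ => continuous_apply i) continuous_const)
    exact (isCompact_univ_pi fun _ => isCompact_Icc).of_isClosed_subset hclosed hsub
  obtain ⟨w0, hw0Δ, hw0min⟩ :=
    hΔcompact.exists_isMinOn ⟨xh, hxhΔ⟩ (Qf_continuous c).continuousOn
  set μ := Qf c w0 with hμ
  have hμneg : μ < 0 := lt_of_le_of_lt (isMinOn_iff.1 hw0min xh hxhΔ) hQxh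
  -- minimal support minimizer
  set supp : (Fin n → ℝ) → Finset (Fin n) := fun z => univ.filter (fun i => z i ≠ 0) with hsupp
  have hex : ∃ k, ∃ z : Fin n → ℝ, (z ∈ Δ ∧ Qf c z = μ) ∧ (supp z).card = k :=
    ⟨_, w0, ⟨hw0Δ, rfl⟩, rfl⟩
  obtain ⟨w, ⟨hwΔ, hwμ⟩, hwcard⟩ := Nat.find_spec hex
  have hmincard : ∀ z : Fin n → ℝ, z ∈ Δ → Qf c z = μ → Nat.find hex ≤ (supp z).card :=
    fun z h1 h2 => Nat.find_min' hex ⟨z, ⟨h1, h2⟩, rfl⟩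
  have hw0' : ∀ i, 0 ≤ w i := hwΔ.1
  have hw1 : ∑ i, w i = 1 := hwΔ.2
  have hwle1 : ∀ i, w i ≤ 1 := fun i => by
    rw [← hw1]; exact Finset.single_le_sum (fun j (_ : j ∈ univ) => hw0' j) (mem_univ i)
  set g : Fin n → ℝ := fun i => ∑ j, c i j * w j with hg
  have hQweq : Qf c w = ∑ i, w i * g i := by
    unfold Qf
    refine Finset.sum_congr rfl fun i _ => ?_
    rw [hg]
    rw [Finset.mul_sum]
    exact Finset.sum_congr rfl fun j _ => by ring
  -- KKT conditions
  have hKKT : ∀ i, w i ≠ 0 → ∀ j, g i ≤ g j := by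
    intro i hi j
    by_contra hlt
    push_neg at hlt
    have hij : i ≠ j := fun h => by rw [h] at hlt; exact lt_irrefl _ hlt
    have hwi : 0 < w i := (hw0' i).lt_of_ne (Ne.symm hi)
    set u : Fin n → ℝ := fun k => (if k = j then (1:ℝ) else 0) - (if k = i then 1 else 0)
      with hu
    have hBu : Bf c w u = g j - g i := by
      unfold Bf
      have h1 : ∀ k, (∑ l, c k l * w k * u l) = c k j * w k - c k i * w k := by
        intro k
        simp only [hu, mul_sub, Finset.sum_sub_distrib]
        congr 1 <;> simp [mul_ite, mul_one, mul_zero]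
      rw [Finset.sum_congr rfl fun k _ => h1 k, Finset.sum_sub_distrib]
      congr 1
      · rw [hg]; exact Finset.sum_congr rfl fun k _ => by rw [csym k j]
      · rw [hg]; exact Finset.sum_congr rfl fun k _ => by rw [csym k i]
    set e := Qf c u with he
    set t := min (w i) ((g i - g j) / (|e| + 1)) with ht
    have ht0 : 0 < t := lt_min hwi (div_pos (by linarith) (by positivity))
    have hti : t ≤ w i := min_le_left _ _
    have hte : t * |e| ≤ g i - g j := by
      have h1 : t ≤ (g i - g j) / (|e| + 1) := min_le_right _ _
      have he0 : (0:ℝ) ≤ |e| := abs_nonneg e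
      calc t * |e| ≤ ((g i - g j) / (|e| + 1)) * |e| :=
            mul_le_mul_of_nonneg_right h1 he0
      _ ≤ g i - g j := by
            rw [div_mul_eq_mul_div, div_le_iff₀ (by positivity)]
            nlinarith
    set w' := w + t • u with hw'
    have hw'Δ : w' ∈ Δ := by
      constructor
      · intro k
        simp only [hw', Pi.add_apply, Pi.smul_apply, smul_eq_mul, hu]
        rcases eq_or_ne k i with rfl | hki
        · rw [if_neg hij, if_pos rfl]
          linarith
        · rcases eq_or_ne k j with rfl | hkj
          · rw [if_pos rfl, if_neg hki]
            have := hw0' k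
            linarith
          · rw [if_neg hkj, if_neg hki]
            have := hw0' k
            linarith
      · simp only [hw', Pi.add_apply, Pi.smul_apply, smul_eq_mul]
        rw [Finset.sum_add_distrib, hw1, ← Finset.mul_sum]
        have : (∑ k, u k) = 0 := by
          simp only [hu, Finset.sum_sub_distrib]
          rw [Finset.sum_ite_eq' univ j (fun _ => (1:ℝ)),
            Finset.sum_ite_eq' univ i (fun _ => (1:ℝ))]
          simp
        rw [this, mul_zero, add_zero]
    have hQw' : Qf c w' = μ + 2 * t * (g j - g i) + t ^ 2 * e := by
      rw [hw', Qf_add_smul csym, hwμ, hBu, he]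
    have hcontr : Qf c w' < μ := by
      have h2 : t ^ 2 * e ≤ t * (g i - g j) := by
        calc t ^ 2 * e ≤ t ^ 2 * |e| :=
              mul_le_mul_of_nonneg_left (le_abs_self e) (sq_nonneg t)
        _ = t * (t * |e|) := by ring
        _ ≤ t * (g i - g j) := mul_le_mul_of_nonneg_left hte ht0.le
      have h3 : Qf c w' ≤ μ + 2 * t * (g j - g i) + t * (g i - g j) := by
        rw [hQw']; linarith
      have h4 : μ + 2 * t * (g j - g i) + t * (g i - g j) = μ + t * (g j - g i) := by ring
      rw [h4] at h3
      nlinarith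
    have := isMinOn_iff.1 hw0min w' hw'Δ
    rw [← hμ] at this
    linarith
  -- the common value λ
  have hSne : ∃ i0, w i0 ≠ 0 := by
    by_contra h
    push_neg at h
    have : (1:ℝ) = 0 := by
      rw [← hw1]; exact Finset.sum_eq_zero fun i _ => h i
    norm_num at this
  obtain ⟨i0, hi0⟩ := hSne
  set lam := g i0 with hlam
  have hglam : ∀ i, w i ≠ 0 → g i = lam := fun i hi =>
    le_antisymm (hKKT i hi i0) (hKKT i0 hi0 i)
  have hμlam : μ = lam := by
    rw [← hwμ, hQweq]
    have : ∀ i, w i * g i = w i * lam := by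
      intro i
      by_cases h : w i = 0
      · rw [h]; ring
      · rw [hglam i h]
    rw [Finset.sum_congr rfl fun i _ => this i, ← Finset.sum_mul, hw1, one_mul]
  have hlamneg : lam < 0 := hμlam ▸ hμneg
  -- the bordered matrix
  set A : Matrix (Fin n ⊕ Unit) (Fin n ⊕ Unit) ℤ := Matrix.of fun r q =>
    match r, q with
    | Sum.inl i, Sum.inl j => if w i ≠ 0 then M i j else (if i = j then 1 else 0)
    | Sum.inl i, Sum.inr _ => if w i ≠ 0 then -1 else 0
    | Sum.inr _, Sum.inl _ => 1
    | Sum.inr _, Sum.inr _ => 0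
    with hA
  have hA11 : ∀ i j, A (Sum.inl i) (Sum.inl j)
      = if w i ≠ 0 then M i j else (if i = j then 1 else 0) := fun i j => rfl
  have hA12 : ∀ i, A (Sum.inl i) (Sum.inr ()) = if w i ≠ 0 then -1 else 0 := fun i => rfl
  have hA21 : ∀ j, A (Sum.inr ()) (Sum.inl j) = 1 := fun j => rfl
  have hA22 : A (Sum.inr ()) (Sum.inr ()) = 0 := rfl
  have hmv : ∀ (v : (Fin n ⊕ Unit) → ℝ) (r : Fin n ⊕ Unit),
      ((A.map (fun z : ℤ => (z:ℝ))) *ᵥ v) r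
        = (∑ j, ((A r (Sum.inl j) : ℤ):ℝ) * v (Sum.inl j))
          + ((A r (Sum.inr ()) : ℤ):ℝ) * v (Sum.inr ()) := by
    intro v r
    simp [Matrix.mulVec, dotProduct, Fintype.sum_sum_type, Matrix.map_apply]
  -- A has nonzero determinant
  have hdetA : A.det ≠ 0 := by
    intro h0
    have hmapdet : (A.map (fun z:ℤ => (z:ℝ))).det = 0 := by
      have h := RingHom.map_det (Int.castRingHom ℝ) A
      have h2 : (Int.castRingHom ℝ).mapMatrix A = A.map (fun z:ℤ => (z:ℝ)) := rfl
      rw [h2] at h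
      rw [← h, h0]
      simp
    obtain ⟨v, hvne, hAv⟩ := Matrix.exists_mulVec_eq_zero_iff.2 hmapdet
    set uu : Fin n → ℝ := fun i => v (Sum.inl i) with huu
    set tt : ℝ := v (Sum.inr ()) with htt
    have hrow1 : ∀ i, w i ≠ 0 → (∑ j, c i j * uu j) = tt := by
      intro i hi
      have h := congrFun hAv (Sum.inl i)
      rw [hmv] at h
      simp only [hA11, hA12, if_pos hi, Pi.zero_apply] at h
      have h3 : (∑ j, c i j * uu j) = ∑ j, ((M i j : ℤ):ℝ) * uu j :=
        Finset.sum_congr rfl fun j _ => by rw [hc]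
      rw [h3]
      push_cast at h
      linarith
    have hrow2 : ∀ i, w i = 0 → uu i = 0 := by
      intro i hi
      have h := congrFun hAv (Sum.inl i)
      rw [hmv] at h
      have hni : ¬ (w i ≠ 0) := by simp [hi]
      simp only [hA11, hA12, if_neg hni, Pi.zero_apply] at h
      simpa [Finset.sum_ite_eq, mul_ite] using h
    have hrow3 : (∑ j, uu j) = 0 := by
      have h := congrFun hAv (Sum.inr ())
      rw [hmv] at h
      simp only [hA21, hA22, Pi.zero_apply] at h
      push_cast at h
      simpa using h
    by_cases hu0 : uu = 0
    · have htt0 : tt ≠ 0 := by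
        intro h
        apply hvne
        funext r
        cases r with
        | inl i => exact congrFun hu0 i
        | inr u => cases u; exact h
      have h := hrow1 i0 hi0
      rw [hu0] at h
      simp at h
      exact htt0 h.symm
    · have hexneg : ∃ k, uu k < 0 := by
        by_contra h
        push_neg at h
        apply hu0
        funext k
        exact (Finset.sum_eq_zero_iff_of_nonneg (fun k _ => h k)).1 hrow3 k (mem_univ k)
      set T := univ.filter (fun k => uu k < 0) with hT
      have hTne : T.Nonempty := by
        obtain ⟨k, hk⟩ := hexneg
        exact ⟨k, by simp [hT, hk]⟩
      obtain ⟨k0, hk0T, hk0min⟩ := Finset.exists_min_image T (fun k => w k / (-uu k)) hTne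
      have hk0neg : uu k0 < 0 := (Finset.mem_filter.1 hk0T).2
      have hk0S : w k0 ≠ 0 := fun h => absurd (hrow2 k0 h) (ne_of_lt hk0neg)
      have hk0pos : 0 < w k0 := (hw0' k0).lt_of_ne (Ne.symm hk0S)
      set s := w k0 / (-uu k0) with hs
      have hs0 : 0 < s := div_pos hk0pos (by linarith)
      set w' := w + s • uu with hw'
      have hw'nonneg : ∀ k, 0 ≤ w' k := by
        intro k
        simp only [hw', Pi.add_apply, Pi.smul_apply, smul_eq_mul]
        rcases le_or_gt 0 (uu k) with h | h
        · exact add_nonneg (hw0' k) (mul_nonneg hs0.le h)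
        · have hkT : k ∈ T := Finset.mem_filter.2 ⟨mem_univ k, h⟩
          have h2 := hk0min k hkT
          rw [le_div_iff₀ (by linarith : (0:ℝ) < -uu k)] at h2
          linarith
      have hw'sum : (∑ k, w' k) = 1 := by
        simp only [hw', Pi.add_apply, Pi.smul_apply, smul_eq_mul]
        rw [Finset.sum_add_distrib, hw1, ← Finset.mul_sum, hrow3, mul_zero, add_zero]
      have hBwu : Bf c w uu = 0 := by
        have h1 : Bf c w uu = ∑ j, uu j * g j := by
          unfold Bf
          rw [Finset.sum_comm]
          refine Finset.sum_congr rfl fun j _ => ?_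
          rw [hg, Finset.mul_sum]
          refine Finset.sum_congr rfl fun i _ => ?_
          rw [csym i j]; ring
        rw [h1]
        have h2 : ∀ j, uu j * g j = lam * uu j := by
          intro j
          by_cases h : uu j = 0
          · rw [h]; ring
          · have hwj : w j ≠ 0 := fun hw => h (hrow2 j hw)
            rw [hglam j hwj]; ring
        rw [Finset.sum_congr rfl fun j _ => h2 j, ← Finset.mul_sum, hrow3, mul_zero]
      have hQuu : Qf c uu = 0 := by
        unfold Qf
        have h1 : ∀ i, (∑ j, c i j * uu i * uu j) = uu i * (∑ j, c i j * uu j) := by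
          intro i
          rw [Finset.mul_sum]
          exact Finset.sum_congr rfl fun j _ => by ring
        rw [Finset.sum_congr rfl fun i _ => h1 i]
        have h2 : ∀ i, uu i * (∑ j, c i j * uu j) = tt * uu i := by
          intro i
          by_cases h : uu i = 0
          · rw [h]; ring
          · have hwi : w i ≠ 0 := fun hw => h (hrow2 i hw)
            rw [hrow1 i hwi]; ring
        rw [Finset.sum_congr rfl fun i _ => h2 i, ← Finset.mul_sum, hrow3, mul_zero]
      have hQw' : Qf c w' = μ := by
        rw [hw', Qf_add_smul csym, hwμ, hBwu, hQuu]; ring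
      have hne : uu k0 ≠ 0 := ne_of_lt hk0neg
      have h5 : w k0 / -uu k0 * uu k0 = -w k0 := by
        rw [div_mul_eq_mul_div, div_eq_iff (neg_ne_zero.2 hne)]
        ring
      have hw'k0 : w' k0 = 0 := by
        simp only [hw', Pi.add_apply, Pi.smul_apply, smul_eq_mul, hs, h5]
        ring
      have hsubset : supp w' ⊆ supp w := by
        intro k hk
        simp only [hsupp, Finset.mem_filter] at hk ⊢
        refine ⟨mem_univ k, fun hwk => ?_⟩
        have huk : uu k = 0 := hrow2 k hwk
        exact hk.2 (by simp [hw', hwk, huk])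
      have hssub : supp w' ⊂ supp w := by
        refine ⟨hsubset, fun hsup => ?_⟩
        have hk0mem : k0 ∈ supp w := Finset.mem_filter.2 ⟨mem_univ _, hk0S⟩
        have hmem := hsup hk0mem
        exact (Finset.mem_filter.1 hmem).2 hw'k0
      have hcard : (supp w').card < (supp w).card := Finset.card_lt_card hssub
      have hge := hmincard w' ⟨hw'nonneg, hw'sum⟩ hQw'
      omega
  -- the linear system
  set vec : (Fin n ⊕ Unit) → ℝ := Sum.elim w (fun _ => lam) with hvec
  have hAvec : (A.map (fun z:ℤ => (z:ℝ))) *ᵥ vec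
      = fun r => Sum.elim (fun _ : Fin n => (0:ℝ)) (fun _ => 1) r := by
    funext r
    rw [hmv]
    cases r with
    | inl i =>
      by_cases hi : w i ≠ 0
      · simp only [hA11, hA12, if_pos hi, hvec, Sum.elim_inl, Sum.elim_inr]
        have h3 : (∑ j, ((M i j : ℤ):ℝ) * w j) = g i := by
          rw [hg]; exact Finset.sum_congr rfl fun j _ => by rw [hc]
        push_cast
        rw [h3, hglam i hi]
        ring
      · push_neg at hi
        have hni : ¬ (w i ≠ 0) := by simp [hi]
        simp only [hA11, hA12, if_neg hni, hvec, Sum.elim_inl, Sum.elim_inr]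
        push_cast
        rw [show (∑ j, (if i = j then (1:ℝ) else 0) * w j) = w i by
          simp [Finset.sum_ite_eq, mul_ite]]
        simp [hi]
    | inr u =>
      cases u
      simp only [hA21, hA22, hvec, Sum.elim_inl, Sum.elim_inr]
      push_cast
      simp [hw1]
  have h1 : Matrix.adjugate (A.map (fun z:ℤ => (z:ℝ))) *ᵥ ((A.map (fun z:ℤ => (z:ℝ))) *ᵥ vec)
      = (A.map (fun z:ℤ => (z:ℝ))).det • vec := by
    rw [Matrix.mulVec_mulVec, Matrix.adjugate_mul, Matrix.smul_mulVec, Matrix.one_mulVec]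
  set z : ℤ := Matrix.adjugate A (Sum.inr ()) (Sum.inr ()) with hz
  have h2 : ((A.det : ℤ):ℝ) * lam = ((z : ℤ) : ℝ) := by
    have h := congrFun h1 (Sum.inr ())
    rw [hAvec] at h
    have hL : (Matrix.adjugate (A.map (fun z:ℤ => (z:ℝ))) *ᵥ
        (fun r => Sum.elim (fun _ : Fin n => (0:ℝ)) (fun _ => 1) r)) (Sum.inr ())
        = Matrix.adjugate (A.map (fun z:ℤ => (z:ℝ))) (Sum.inr ()) (Sum.inr ()) := by
      simp [Matrix.mulVec, dotProduct, Fintype.sum_sum_type]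
    have hadj : Matrix.adjugate (A.map (fun z:ℤ => (z:ℝ))) (Sum.inr ()) (Sum.inr ())
        = ((z : ℤ) : ℝ) := by
      have hmap : (Int.castRingHom ℝ).mapMatrix (Matrix.adjugate A)
          = Matrix.adjugate (A.map (fun z:ℤ => (z:ℝ))) :=
        RingHom.map_adjugate (Int.castRingHom ℝ) A
      rw [← hmap]
      rfl
    have hdet : (A.map (fun z:ℤ => (z:ℝ))).det = ((A.det : ℤ):ℝ) := by
      have hh := RingHom.map_det (Int.castRingHom ℝ) A
      have hh2 : (Int.castRingHom ℝ).mapMatrix A = A.map (fun z:ℤ => (z:ℝ)) := rfl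
      rw [hh2] at hh
      rw [← hh]
      rfl
    rw [hL, hadj, Pi.smul_apply, smul_eq_mul, hdet] at h
    simp only [hvec, Sum.elim_inr] at h
    exact h.symm
  have hzne : z ≠ 0 := by
    intro h
    rw [h] at h2
    have : ((A.det : ℤ):ℝ) * lam ≠ 0 :=
      mul_ne_zero (Int.cast_ne_zero.2 hdetA) (ne_of_lt hlamneg)
    rw [h2] at this
    simp at this
  -- determinant bound
  set K : ℕ := Nat.factorial (n + 1) * ∏ i : Fin n, ∏ j : Fin n, ((M i j).natAbs + 1)
    with hK
  have hG : ∀ (r q : Fin n ⊕ Unit), |A r q| ≤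
      Sum.elim (fun i => ∏ j : Fin n, (((M i j).natAbs : ℤ) + 1)) (fun _ => (1:ℤ)) r := by
    have hprod1 : ∀ i : Fin n, (1:ℤ) ≤ ∏ j : Fin n, (((M i j).natAbs : ℤ) + 1) := by
      intro i
      have h := Finset.prod_pos (s := (univ : Finset (Fin n)))
        (f := fun j => ((M i j).natAbs : ℤ) + 1) (fun j _ => by positivity)
      linarith [Int.add_one_le_iff.mpr h]
    intro r q
    cases r with
    | inl i =>
      have hM : ∀ j, |M i j| ≤ ∏ j' : Fin n, (((M i j').natAbs : ℤ) + 1) := by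
        intro j
        have he : (((M i j).natAbs : ℤ) + 1) * ∏ j' ∈ univ.erase j, (((M i j').natAbs : ℤ) + 1)
            = ∏ j' : Fin n, (((M i j').natAbs : ℤ) + 1) :=
          Finset.mul_prod_erase univ (fun j' => ((M i j').natAbs : ℤ) + 1) (mem_univ j)
        have hrest : 0 < ∏ j' ∈ univ.erase j, (((M i j').natAbs : ℤ) + 1) :=
          Finset.prod_pos fun j' _ => by positivity
        have habs : |M i j| = ((M i j).natAbs : ℤ) := Int.abs_eq_natAbs _
        rw [habs, ← he]
        nlinarith [Int.natCast_nonneg ((M i j).natAbs)]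
      simp only [Sum.elim_inl]
      cases q with
      | inl j =>
        rw [hA11]
        by_cases h : w i ≠ 0
        · rw [if_pos h]; exact hM j
        · rw [if_neg h]
          by_cases h2 : i = j
          · rw [if_pos h2, abs_one]; exact hprod1 i
          · rw [if_neg h2, abs_zero]; linarith [hprod1 i]
      | inr u3 =>
        cases u3
        rw [hA12]
        by_cases h : w i ≠ 0
        · rw [if_pos h, abs_neg, abs_one]; exact hprod1 i
        · rw [if_neg h, abs_zero]; linarith [hprod1 i]
    | inr u =>
      cases u
      simp only [Sum.elim_inr]
      cases q with
      | inl j => rw [hA21]; simp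
      | inr u2 => cases u2; rw [hA22]; simp
  have hcardS : Fintype.card (Fin n ⊕ Unit) = n + 1 := by simp
  have hdetK : |A.det| ≤ (K : ℤ) := by
    have hbound := det_abs_le A _ hG
    rw [hcardS] at hbound
    have hprodG : (∏ r : Fin n ⊕ Unit,
        (Sum.elim (fun i => ∏ j : Fin n, (((M i j).natAbs : ℤ) + 1)) (fun _ => (1:ℤ)) r))
        = ∏ i : Fin n, ∏ j : Fin n, (((M i j).natAbs : ℤ) + 1) := by
      rw [Fintype.prod_sum_type]; simp
    rw [hprodG] at hbound
    calc |A.det| ≤ _ := hbound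
    _ = (K:ℤ) := by rw [hK]; push_cast; ring
  -- conclude
  have h1K : (1:ℝ) ≤ |((z : ℤ):ℝ)| := by
    have : (1:ℤ) ≤ |z| := Int.one_le_abs hzne
    exact_mod_cast this
  have habs : |((A.det : ℤ):ℝ)| * |lam| = |((z : ℤ):ℝ)| := by
    rw [← abs_mul, h2]
  have hdetKR : |((A.det : ℤ):ℝ)| ≤ (K:ℝ) := by
    have : (|A.det| : ℤ) ≤ (K : ℤ) := hdetK
    calc |((A.det : ℤ):ℝ)| = ((|A.det| : ℤ) : ℝ) := by push_cast; ring
    _ ≤ (K:ℝ) := by exact_mod_cast this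
  have hKlam : (1:ℝ) ≤ (K:ℝ) * (-lam) := by
    have hlamabs : |lam| = -lam := abs_of_neg hlamneg
    calc (1:ℝ) ≤ |((z : ℤ):ℝ)| := h1K
    _ = |((A.det : ℤ):ℝ)| * |lam| := habs.symm
    _ ≤ (K:ℝ) * |lam| := mul_le_mul_of_nonneg_right hdetKR (abs_nonneg lam)
    _ = (K:ℝ) * (-lam) := by rw [hlamabs]
  refine ⟨w, hw0', hwle1, ?_⟩
  rw [hwμ, hμlam]
  linarith

end Stmt0Aux

set_option maxHeartbeats 2000000 in
theorem stmt0 {n : ℕ} (hn : 1 ≤ n) (M : Matrix (Fin n) (Fin n) ℤ)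
    (hsym : M.IsSymm)
    (hncop : ∃ x : Fin n → ℝ, (∀ i, 0 ≤ x i) ∧
      x ⬝ᵥ (M.map ((↑) : ℤ → ℝ)) *ᵥ x < 0)
    (L d : ℕ) (hL : L = encodingLength M) (hd : d = maxAbs M) :
    ∃ y : Fin n → ℚ, (∀ j, 0 ≤ y j) ∧
      y ⬝ᵥ (M.map ((↑) : ℤ → ℚ)) *ᵥ y < 0 ∧
      ∀ j, ∃ a : ℕ, y j = (a : ℚ) / (4 * d * n ^ 2) ∧
        (a : ℚ) ≤ 4 * d * n ^ 2 * 2 ^ (2 * L - 1) + 1 := by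
  classical
  set c : Fin n → Fin n → ℝ := fun i j => ((M i j : ℤ) : ℝ) with hcdef
  have hc : ∀ i j, c i j = ((M i j : ℤ) : ℝ) := fun i j => rfl
  have hMsym : ∀ i j, M i j = M j i := by
    intro i j
    have := congrFun (congrFun hsym j) i
    rwa [Matrix.transpose_apply] at this
  obtain ⟨x0, hx0nn, hx0Q⟩ := hncop
  have hQform : ∀ x : Fin n → ℝ, x ⬝ᵥ (M.map ((↑) : ℤ → ℝ)) *ᵥ x = Stmt0Aux.Qf c x := by
    intro x
    simp only [dotProduct, Matrix.mulVec, Matrix.map_apply, Stmt0Aux.Qf, Finset.mul_sum]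
    refine Finset.sum_congr rfl fun i _ => Finset.sum_congr rfl fun j _ => ?_
    rw [hc]; ring
  have hx0Q' : Stmt0Aux.Qf c x0 < 0 := by rw [← hQform]; exact hx0Q
  -- d is positive
  have hdle : ∀ i j, (M i j).natAbs ≤ d := by
    intro i j
    rw [hd]
    exact Finset.le_sup (f := fun p : Fin n × Fin n => (M p.1 p.2).natAbs)
      (Finset.mem_univ (i, j))
  have hd1 : 1 ≤ d := by
    by_contra h
    push_neg at h
    have hd0 : d = 0 := by omega
    have hM0 : ∀ i j, M i j = 0 := by
      intro i j
      have := hdle i j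
      rw [hd0] at this
      exact Int.natAbs_eq_zero.1 (Nat.le_zero.1 this)
    have hQ0 : Stmt0Aux.Qf c x0 = 0 := by
      unfold Stmt0Aux.Qf
      refine Finset.sum_eq_zero fun i _ => Finset.sum_eq_zero fun j _ => ?_
      rw [hc, hM0 i j]
      simp
    rw [hQ0] at hx0Q'
    exact lt_irrefl 0 hx0Q'
  -- the gap lemma
  obtain ⟨w, hwnn, hwle1, hwgap⟩ := Stmt0Aux.gap hn M hsym c hc x0 hx0nn hx0Q'
  set K : ℕ := Nat.factorial (n + 1) * ∏ i : Fin n, ∏ j : Fin n, ((M i j).natAbs + 1)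
    with hKdef
  obtain ⟨hKle, hL1⟩ := Stmt0Aux.count_bound hn (fun i j => (M i j).natAbs)
    (fun i j => by show (M i j).natAbs = (M j i).natAbs; rw [hMsym]) L (by rw [hL]; rfl)
  set R : ℝ := (2 : ℝ) ^ (2 * L - 1) with hR
  have hRpos : 0 < R := by positivity
  have hKR : (K : ℝ) ≤ R := by
    have h0 : ((K : ℕ) : ℝ) ≤ ((2 ^ (2 * L - 1) : ℕ) : ℝ) := by exact_mod_cast hKle
    calc (K : ℝ) ≤ ((2 ^ (2 * L - 1) : ℕ) : ℝ) := h0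
    _ = R := by rw [hR]; push_cast; ring
  have hK1 : (1 : ℝ) ≤ (K : ℝ) := by
    have h0 : 1 ≤ K := by
      rw [hKdef]
      have h1 : 0 < Nat.factorial (n + 1) := Nat.factorial_pos _
      have h2 : 0 < ∏ i : Fin n, ∏ j : Fin n, ((M i j).natAbs + 1) :=
        Finset.prod_pos fun i _ => Finset.prod_pos fun j _ => Nat.succ_pos _
      exact Nat.one_le_iff_ne_zero.2 (Nat.mul_ne_zero h1.ne' h2.ne')
    exact_mod_cast h0
  have hQwneg : Stmt0Aux.Qf c w < 0 := by nlinarith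
  have h6 : R * Stmt0Aux.Qf c w ≤ (K : ℝ) * Stmt0Aux.Qf c w :=
    mul_le_mul_of_nonpos_right hKR hQwneg.le
  have h7 : R * Stmt0Aux.Qf c w ≤ -1 := h6.trans hwgap
  have hmuR : R ^ 2 * Stmt0Aux.Qf c w ≤ -R := by nlinarith
  -- rounding
  have hn0 : (0 : ℝ) < n := by exact_mod_cast hn
  have hd0 : (0 : ℝ) < d := by exact_mod_cast hd1
  set D : ℝ := 4 * (d : ℝ) * (n : ℝ) ^ 2 with hD
  have hDpos : 0 < D := by rw [hD]; positivity
  set a : Fin n → ℕ := fun j => ⌊D * (R * w j)⌋₊ with ha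
  set yR : Fin n → ℝ := fun j => (a j : ℝ) / D with hyR
  have hDXnn : ∀ j, 0 ≤ D * (R * w j) :=
    fun j => mul_nonneg hDpos.le (mul_nonneg hRpos.le (hwnn j))
  have hfloor_le : ∀ j, (a j : ℝ) ≤ D * (R * w j) := fun j => Nat.floor_le (hDXnn j)
  have hflt : ∀ j, D * (R * w j) < (a j : ℝ) + 1 := fun j => Nat.lt_floor_add_one _
  have hyR_le : ∀ j, yR j ≤ R * w j := by
    intro j
    rw [hyR, div_le_iff₀ hDpos]
    calc (a j : ℝ) ≤ D * (R * w j) := hfloor_le j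
    _ = R * w j * D := by ring
  have hyR_nn : ∀ j, 0 ≤ yR j := fun j => div_nonneg (Nat.cast_nonneg _) hDpos.le
  have hdiff : ∀ j, R * w j - yR j ≤ 1 / D := by
    intro j
    have h1 := hflt j
    have h2 : R * w j < ((a j : ℝ) + 1) / D := by
      rw [lt_div_iff₀ hDpos]
      calc R * w j * D = D * (R * w j) := by ring
      _ < (a j : ℝ) + 1 := h1
    rw [add_div] at h2
    rw [hyR]
    linarith
  have hXle : ∀ j, R * w j ≤ R := by
    intro j
    calc R * w j ≤ R * 1 := mul_le_mul_of_nonneg_left (hwle1 j) hRpos.le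
    _ = R := mul_one R
  have habsc : ∀ i j, |c i j| ≤ (d : ℝ) := by
    intro i j
    rw [hc, ← Int.cast_abs, Int.abs_eq_natAbs]
    have h1 : (M i j).natAbs ≤ d := hdle i j
    exact_mod_cast h1
  -- quadratic estimate
  have hterm : ∀ i j : Fin n, c i j * yR i * yR j
      ≤ c i j * ((R • w) i) * ((R • w) j) + (d : ℝ) * (2 * R / D) := by
    intro i j
    simp only [Pi.smul_apply, smul_eq_mul]
    have habs1 : |yR i - R * w i| ≤ 1 / D := by
      rw [abs_le]
      constructor
      · linarith [hdiff i]
      · linarith [hyR_le i, hDpos, one_div_nonneg.2 hDpos.le]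
    have habs2 : |yR j - R * w j| ≤ 1 / D := by
      rw [abs_le]
      constructor
      · linarith [hdiff j]
      · linarith [hyR_le j, hDpos, one_div_nonneg.2 hDpos.le]
    have habsy : |yR j| ≤ R := by
      rw [abs_of_nonneg (hyR_nn j)]
      linarith [hyR_le j, hXle j]
    have habsX : |R * w i| ≤ R := by
      rw [abs_of_nonneg (mul_nonneg hRpos.le (hwnn i))]
      exact hXle i
    have h2 : |yR i * yR j - (R * w i) * (R * w j)| ≤ 1 / D * R + R * (1 / D) := by
      have e : yR i * yR j - (R * w i) * (R * w j)
          = (yR i - R * w i) * yR j + (R * w i) * (yR j - R * w j) := by ring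
      rw [e]
      calc |(yR i - R * w i) * yR j + (R * w i) * (yR j - R * w j)|
          ≤ |(yR i - R * w i) * yR j| + |(R * w i) * (yR j - R * w j)| := abs_add_le _ _
      _ = |yR i - R * w i| * |yR j| + |R * w i| * |yR j - R * w j| := by
            rw [abs_mul, abs_mul]
      _ ≤ 1 / D * R + R * (1 / D) := by
            have t1 : |yR i - R * w i| * |yR j| ≤ 1 / D * R :=
              mul_le_mul habs1 habsy (abs_nonneg _) (one_div_nonneg.2 hDpos.le)
            have t2 : |R * w i| * |yR j - R * w j| ≤ R * (1 / D) :=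
              mul_le_mul habsX habs2 (abs_nonneg _) hRpos.le
            linarith
    have h1 : c i j * yR i * yR j - c i j * (R * w i) * (R * w j)
        ≤ |c i j| * |yR i * yR j - (R * w i) * (R * w j)| := by
      calc c i j * yR i * yR j - c i j * (R * w i) * (R * w j)
          = c i j * (yR i * yR j - (R * w i) * (R * w j)) := by ring
      _ ≤ |c i j * (yR i * yR j - (R * w i) * (R * w j))| := le_abs_self _
      _ = |c i j| * |yR i * yR j - (R * w i) * (R * w j)| := abs_mul _ _
    have h3 : |c i j| * |yR i * yR j - (R * w i) * (R * w j)| ≤ (d : ℝ) * (2 * R / D) := by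
      calc |c i j| * |yR i * yR j - (R * w i) * (R * w j)|
          ≤ (d : ℝ) * (1 / D * R + R * (1 / D)) :=
            mul_le_mul (habsc i j) h2 (abs_nonneg _) hd0.le
      _ = (d : ℝ) * (2 * R / D) := by ring
    linarith
  have hQyR : Stmt0Aux.Qf c yR
      ≤ Stmt0Aux.Qf c (R • w) + (n : ℝ) ^ 2 * ((d : ℝ) * (2 * R / D)) := by
    unfold Stmt0Aux.Qf
    have hsum : ∑ i : Fin n, ∑ j : Fin n, (c i j * yR i * yR j)
        ≤ ∑ i : Fin n, ∑ j : Fin n,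
          (c i j * ((R • w) i) * ((R • w) j) + (d : ℝ) * (2 * R / D)) :=
      Finset.sum_le_sum fun i _ => Finset.sum_le_sum fun j _ => hterm i j
    have hconst : ∑ i : Fin n, ∑ j : Fin n,
        (c i j * ((R • w) i) * ((R • w) j) + (d : ℝ) * (2 * R / D))
        = (∑ i : Fin n, ∑ j : Fin n, c i j * ((R • w) i) * ((R • w) j))
          + (n : ℝ) ^ 2 * ((d : ℝ) * (2 * R / D)) := by
      rw [Finset.sum_congr rfl fun i (_ : i ∈ univ) => Finset.sum_add_distrib,
        Finset.sum_add_distrib]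
      congr 1
      rw [Finset.sum_congr rfl fun i (_ : i ∈ univ) => Finset.sum_const _,
        Finset.sum_const, Finset.card_univ, Fintype.card_fin, smul_smul, nsmul_eq_mul]
      push_cast
      ring
    rw [hconst] at hsum
    exact hsum
  have hhalf : (n : ℝ) ^ 2 * ((d : ℝ) * (2 * R / D)) = R / 2 := by
    rw [hD]
    field_simp
    ring
  have hfin : Stmt0Aux.Qf c yR < 0 := by
    have hq := hQyR
    rw [Stmt0Aux.Qf_smul, hhalf] at hq
    linarith
  refine ⟨fun j => (a j : ℚ) / (4 * d * n ^ 2), fun j => by positivity, ?_, ?_⟩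
  · have hqr : (((fun j => (a j : ℚ) / (4 * d * n ^ 2)) ⬝ᵥ
        (M.map ((↑) : ℤ → ℚ)) *ᵥ (fun j => (a j : ℚ) / (4 * d * n ^ 2)) : ℚ) : ℝ)
        = Stmt0Aux.Qf c yR := by
      simp only [dotProduct, Matrix.mulVec, Matrix.map_apply, Stmt0Aux.Qf]
      push_cast
      refine Finset.sum_congr rfl fun i _ => ?_
      rw [Finset.mul_sum]
      refine Finset.sum_congr rfl fun j _ => ?_
      rw [hc]
      simp only [hyR, hD]
      push_cast
      ring
    have hlt := hfin
    rw [← hqr] at hlt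
    exact_mod_cast hlt
  · intro j
    refine ⟨a j, rfl, ?_⟩
    have h1 : (a j : ℝ) ≤ D * R := by
      calc (a j : ℝ) ≤ D * (R * w j) := hfloor_le j
      _ ≤ D * R := mul_le_mul_of_nonneg_left (hXle j) hDpos.le
    have h2 : D * R = ((4 * d * n ^ 2 * 2 ^ (2 * L - 1) : ℕ) : ℝ) := by
      rw [hD, hR]
      push_cast
      ring
    have h3 : a j ≤ 4 * d * n ^ 2 * 2 ^ (2 * L - 1) := by
      have h4 := h1.trans_eq h2
      exact_mod_cast h4
    have h4 : (a j : ℚ) ≤ ((4 * d * n ^ 2 * 2 ^ (2 * L - 1) : ℕ) : ℚ) := by exact_mod_cast h3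
    push_cast at h4
    linarith
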